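/- For every integer k ≥ 2, the absolute value of the discriminant of the k-generalized Fibonacci polynomial f_k equals (2^(k+1) · k^k − (k+1)^(k+1)) / (k−1)^2. -/

import Mathlib

open Polynomial

/-- The `k`-generalized Fibonacci polynomial `f_k(X) = X^k - X^(k-1) - ⋯ - X - 1`,
viewed as a polynomial over `ℂ`. -/
noncomputable def fibPoly (k : ℕ) : Polynomial ℂ :=
  X ^ k - ∑ i ∈ Finset.range k, X ^ i

/-- The absolute value of the discriminant of a polynomial over `ℂ`.
For a monic polynomial `p` of degree `n` with roots `r_1, …, r_n` (with multiplicity)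
in `ℂ`, one has `|disc p| = ∏ i, |p'(r_i)|`, which we take as the definition. -/
noncomputable def absDisc (p : Polynomial ℂ) : ℝ :=
  (p.roots.map fun r => ‖p.derivative.eval r‖).prod

lemma key (k : ℕ) : (X - 1) * fibPoly k = X ^ (k+1) - 2 * X ^ k + 1 := by
  unfold fibPoly
  rw [mul_sub, mul_comm (X - 1 : ℂ[X]) (∑ i ∈ Finset.range k, X ^ i), geom_sum_mul]
  ring

lemma degree_sum_lt (k : ℕ) : (∑ i ∈ Finset.range k, (X:ℂ[X]) ^ i).degree < k := by
  apply lt_of_le_of_lt (degree_sum_le _ _)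
  rw [Finset.sup_lt_iff (by exact_mod_cast WithBot.bot_lt_coe k)]
  intro i hi
  apply lt_of_le_of_lt (degree_X_pow_le i)
  exact_mod_cast Finset.mem_range.mp hi

lemma monic_fib (k : ℕ) : (fibPoly k).Monic :=
  monic_X_pow_sub (degree_sum_lt k)

lemma degree_fib (k : ℕ) : (fibPoly k).degree = k := by
  unfold fibPoly
  rw [degree_sub_eq_left_of_degree_lt (by rw [degree_X_pow]; exact degree_sum_lt k),
    degree_X_pow]

lemma natDegree_fib (k : ℕ) : (fibPoly k).natDegree = k :=
  natDegree_eq_of_degree_eq_some (degree_fib k)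

lemma fib_eq_prod (k : ℕ) :
    fibPoly k = ((fibPoly k).roots.map fun r => X - C r).prod :=
  (IsAlgClosed.splits _).eq_prod_roots_of_monic (monic_fib k)

lemma eval_eq (k : ℕ) (z : ℂ) :
    (fibPoly k).eval z = ((fibPoly k).roots.map fun r => z - r).prod := by
  conv_lhs => rw [fib_eq_prod k]
  rw [eval_multiset_prod, Multiset.map_map]
  simp

lemma abs_eval_eq (k : ℕ) (z : ℂ) :
    ‖(fibPoly k).eval z‖
      = ((fibPoly k).roots.map fun r => ‖z - r‖).prod := by
  rw [eval_eq]
  exact (map_multiset_prod (normHom : ℂ →*₀ ℝ) _).trans (by rw [Multiset.map_map]; rfl)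

lemma roots_card (k : ℕ) : Multiset.card (fibPoly k).roots = k := by
  have h := (splits_iff_card_roots (f := fibPoly k)).mp (IsAlgClosed.splits _)
  rwa [natDegree_fib] at h

lemma fib_eval_one (k : ℕ) : (fibPoly k).eval 1 = 1 - k := by
  simp [fibPoly, eval_finset_sum]

lemma fib_eval_zero (k : ℕ) (hk : 1 ≤ k) : (fibPoly k).eval 0 = -1 := by
  simp only [fibPoly, eval_sub, eval_pow, eval_X, eval_finset_sum]
  rw [Finset.sum_eq_single 0, zero_pow (by omega)] <;> simp
  omega

lemma deriv_at_root (k : ℕ) {r : ℂ} (hr : r ∈ (fibPoly k).roots) :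
    (r - 1) * ((fibPoly k).derivative.eval r) = (k+1) * r^k - 2*k*r^(k-1) := by
  have hf : (fibPoly k).eval r = 0 := (mem_roots'.mp hr).2
  have h := congrArg (fun p => Polynomial.eval r (derivative p)) (key k)
  simp only [derivative_mul, derivative_sub, derivative_one, derivative_X,
    derivative_add, derivative_X_pow, derivative_mul, derivative_ofNat, eval_add,
    eval_sub, eval_mul, eval_pow, eval_X, Polynomial.eval_one, eval_zero, eval_C,
    Nat.add_sub_cancel, hf, mul_zero, Polynomial.eval_ofNat, zero_mul, zero_add, add_zero, sub_zero] at h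
  push_cast at h ⊢
  linear_combination h

lemma root_ne_one (k : ℕ) (hk : 2 ≤ k) {r : ℂ} (hr : r ∈ (fibPoly k).roots) : r ≠ 1 := by
  rintro rfl
  have hf : (fibPoly k).eval 1 = 0 := (mem_roots'.mp hr).2
  rw [fib_eval_one] at hf
  have : (k : ℂ) = 1 := by linear_combination -hf
  have : (k : ℂ) ≠ 1 := by exact_mod_cast (by omega : k ≠ 1)
  tauto

lemma pointwise (k : ℕ) (hk : 2 ≤ k) {r : ℂ} (hr : r ∈ (fibPoly k).roots) :
    ‖(fibPoly k).derivative.eval r‖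
      = ‖r‖ ^ (k-1) * (((k:ℝ)+1) * ‖r - 2*k/(k+1)‖)
        * (‖r - 1‖)⁻¹ := by
  have h1 : r - 1 ≠ 0 := sub_ne_zero.mpr (root_ne_one k hk hr)
  have hk1 : ((k:ℂ)+1) ≠ 0 := by
    intro h; have : (k:ℂ) = -1 := by linear_combination h
    have h2 : ((k:ℂ)).im = 0 := by simp
    have h3 : ((k:ℝ):ℂ).re = k := by simp
    have : (k:ℝ) = -1 := by exact_mod_cast congrArg Complex.re this
    have : (0:ℝ) ≤ (k:ℝ) := Nat.cast_nonneg k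
    linarith
  have hd := deriv_at_root k hr
  have heq : (fibPoly k).derivative.eval r
      = r ^ (k-1) * (((k:ℂ)+1) * (r - 2*k/(k+1))) * (r - 1)⁻¹ := by
    have hkk : r ^ k = r ^ (k-1) * r := by
      conv_lhs => rw [show k = (k-1)+1 by omega]
      ring
    field_simp
    linear_combination hd + ((k:ℂ)+1) * hkk
  rw [heq]
  rw [norm_mul, norm_mul, norm_mul, norm_inv, norm_pow]
  congr 2
  have : ((k:ℂ)+1) = (((k:ℝ)+1 : ℝ) : ℂ) := by push_cast; ring
  rw [this, Complex.norm_real, Real.norm_eq_abs, abs_of_pos (by positivity)]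

lemma ineqN (k : ℕ) (hk : 2 ≤ k) : (k+1)^(k+1) ≤ 2^(k+1) * k^k := by
  induction k, hk using Nat.le_induction with
  | base => norm_num
  | succ k hk ih =>
    have hkpos : 0 < k ^ k := pow_pos (by omega) k
    apply Nat.le_of_mul_le_mul_right (c := k ^ k) _ hkpos
    calc (k+1+1)^(k+1+1) * k^k
        = (k+2)^2 * ((k+2)*k)^k := by rw [mul_pow]; ring
      _ ≤ (2*(k+1)^2) * ((k+1)^2)^k := by
          apply Nat.mul_le_mul
          · nlinarith
          · exact Nat.pow_le_pow_left (by nlinarith) k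
      _ = 2 * ((k+1)^(k+1) * (k+1)^(k+1)) := by rw [← pow_mul]; ring
      _ ≤ 2 * ((k+1)^(k+1) * (2^(k+1) * k^k)) := by
          exact Nat.mul_le_mul_left 2 (Nat.mul_le_mul_left _ ih)
      _ = 2^(k+1+1) * (k+1)^(k+1) * k^k := by ring

lemma ineqR (k : ℕ) (hk : 2 ≤ k) : ((k:ℝ)+1)^(k+1) ≤ 2^(k+1) * (k:ℝ)^k := by
  exact_mod_cast Nat.cast_le.mpr (ineqN k hk)

lemma prod_abs_roots (k : ℕ) (hk : 2 ≤ k) :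
    ((fibPoly k).roots.map fun r => ‖r‖).prod = 1 := by
  have h := abs_eval_eq k 0
  rw [fib_eval_zero k (by omega)] at h
  simp only [zero_sub, norm_neg] at h
  simpa using h.symm

lemma prod_abs_sub_one (k : ℕ) (hk : 2 ≤ k) :
    ((fibPoly k).roots.map fun r => ‖r - 1‖).prod = (k:ℝ) - 1 := by
  have h := abs_eval_eq k 1
  rw [fib_eval_one k] at h
  have h1 : (1 - (k:ℂ)) = (((1:ℝ) - k : ℝ) : ℂ) := by push_cast; ring
  rw [h1, Complex.norm_real, Real.norm_eq_abs, abs_of_nonpos (by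
    have : (2:ℝ) ≤ (k:ℝ) := by exact_mod_cast hk
    linarith)] at h
  have h2 : ((fibPoly k).roots.map fun r => ‖1 - r‖).prod
      = ((fibPoly k).roots.map fun r => ‖r - 1‖).prod := by
    congr 1
    apply Multiset.map_congr rfl
    intro r _
    rw [← norm_neg, neg_sub]
  rw [h2] at h
  rw [← h]; push_cast; ring

lemma prod_abs_sub_c (k : ℕ) (c : ℂ) :
    ((fibPoly k).roots.map fun r => ‖r - c‖).prod
      = ‖(fibPoly k).eval c‖ := by
  rw [abs_eval_eq]
  congr 1
  apply Multiset.map_congr rfl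
  intro r _
  rw [← norm_neg, neg_sub]

lemma abs_eval_a (k : ℕ) (hk : 2 ≤ k) :
    ‖(fibPoly k).eval ((2*(k:ℝ)/((k:ℝ)+1) : ℝ) : ℂ)‖
      = (2^(k+1)*(k:ℝ)^k - ((k:ℝ)+1)^(k+1)) / (((k:ℝ)+1)^k * ((k:ℝ)-1)) := by
  have hkr : (2:ℝ) ≤ (k:ℝ) := by exact_mod_cast hk
  set b : ℝ := 2*(k:ℝ)/((k:ℝ)+1) with hb
  have hk1 : (0:ℝ) < (k:ℝ) + 1 := by linarith
  have hkm : (0:ℝ) < (k:ℝ) - 1 := by linarith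
  have hbne : (b:ℂ) - 1 ≠ 0 := by
    intro h
    have : b = 1 := by exact_mod_cast sub_eq_zero.mp h
    rw [hb] at this; field_simp at this; linarith
  have hkey := congrArg (eval ((b:ℝ):ℂ)) (key k)
  simp only [eval_mul, eval_add, eval_sub, eval_pow, eval_X, eval_one, eval_ofNat] at hkey
  have heval : (fibPoly k).eval ((b:ℝ):ℂ)
      = ((((b^(k+1) - 2*b^k + 1)/(b-1)) : ℝ) : ℂ) := by
    have hbne' : b - 1 ≠ 0 := by
      intro h; apply hbne; rw [show ((b:ℝ):ℂ) - 1 = (((b - 1 : ℝ)):ℂ) by push_cast; ring, h]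
      simp
    rw [show ((((b^(k+1) - 2*b^k + 1)/(b-1)) : ℝ) : ℂ)
        = (((b:ℝ):ℂ)^(k+1) - 2*((b:ℝ):ℂ)^k + 1)/(((b:ℝ):ℂ)-1) by push_cast; ring]
    rw [eq_div_iff hbne]
    linear_combination hkey
  rw [heval, Complex.norm_real, Real.norm_eq_abs]
  have hnum : b^(k+1) - 2*b^k + 1
      = (((k:ℝ)+1)^(k+1) - 2^(k+1)*(k:ℝ)^k) / ((k:ℝ)+1)^(k+1) := by
    rw [hb, div_pow, div_pow]
    field_simp
    ring
  have hden : b - 1 = ((k:ℝ)-1)/((k:ℝ)+1) := by rw [hb]; field_simp; ring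
  have e1 : |((((k:ℝ)+1)^(k+1) - 2^(k+1)*(k:ℝ)^k) / ((k:ℝ)+1)^(k+1))|
      = (2^(k+1)*(k:ℝ)^k - ((k:ℝ)+1)^(k+1)) / ((k:ℝ)+1)^(k+1) := by
    rw [abs_div, abs_of_nonpos (sub_nonpos.mpr (ineqR k hk)), abs_of_pos (by positivity)]
    ring
  have e2 : |((k:ℝ)-1)/((k:ℝ)+1)| = ((k:ℝ)-1)/((k:ℝ)+1) := abs_of_pos (by positivity)
  rw [hnum, hden, abs_div, e1, e2]
  rw [div_div_div_eq, pow_succ]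
  have hne1 : ((k:ℝ)+1)^k ≠ 0 := by positivity
  have hne2 : ((k:ℝ)-1) ≠ 0 := ne_of_gt hkm
  field_simp
  ring

/-- For every integer `k ≥ 2`, the absolute value of the discriminant of the
`k`-generalized Fibonacci polynomial `f_k` equals
`(2^(k+1) · k^k − (k+1)^(k+1)) / (k−1)^2`. -/
theorem absDisc_fibPoly (k : ℕ) (hk : 2 ≤ k) :
    absDisc (fibPoly k) =
      (2 ^ (k + 1) * (k : ℝ) ^ k - ((k : ℝ) + 1) ^ (k + 1)) / ((k : ℝ) - 1) ^ 2 := by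
  have hkr : (2:ℝ) ≤ (k:ℝ) := by exact_mod_cast hk
  have hc : ((2*(k:ℝ)/((k:ℝ)+1) : ℝ) : ℂ) = 2*(k:ℂ)/((k:ℂ)+1) := by push_cast; ring
  unfold absDisc
  rw [Multiset.map_congr rfl (fun r hr => by
    rw [pointwise k hk hr, ← hc])]
  rw [Multiset.prod_map_mul, Multiset.prod_map_mul, Multiset.prod_map_inv,
    Multiset.prod_map_pow]
  rw [Multiset.prod_map_mul, Multiset.map_const', Multiset.prod_replicate, roots_card]
  rw [prod_abs_roots k hk, prod_abs_sub_one k hk, prod_abs_sub_c, abs_eval_a k hk]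
  have hne1 : ((k:ℝ)+1)^k ≠ 0 := by positivity
  have hne2 : ((k:ℝ)-1) ≠ 0 := by intro h; nlinarith
  rw [one_pow, one_mul]
  field_simp
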